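/- Assume k = 2m − 2 (i.e., s = 2) and m ≥ 3. For distinct indices i, j ∈ {1,…,m} and a nonzero vector P ∈ L_i, the subspace span((⋃_{r ∉ {i,j}} L_r) ∪ {P}) intersects L_j in a one-dimensional subspace; this defines a map f_{i,j} from the projective points of L_i to the projective points of L_j by f_{i,j}(⟨P⟩) = span((⋃_{r ∉ {i,j}} L_r) ∪ {P}) ∩ L_j, and one sets f_{i,i} = id. Then: (1) f_{j,ℓ} ∘ f_{i,j} = f_{i,ℓ} for all i, j, ℓ ∈ {1,…,m}; and (2) each f_{i,j} is a bijection between the q+1 projective points of L_i and the q+1 projective points of L_j. -/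

import Mathlib

open scoped Classical
noncomputable section

open Module Submodule Projectivization

/-- Points of projective space lying in a submodule `W` are the projectivization of `W`. -/
def ptSubEquiv {K V : Type*} [Field K] [AddCommGroup V] [Module K V] (W : Submodule K V) :
    {x : Projectivization K V // x.submodule ≤ W} ≃ Projectivization K W where
  toFun x :=
    Projectivization.mk K (⟨x.1.rep, x.2 (x.1.submodule_eq ▸ Submodule.mem_span_singleton_self _)⟩ : W)
      (fun h => x.1.rep_nonzero (congrArg Subtype.val h))
  invFun y :=
    ⟨Projectivization.mk K (y.rep : V) (fun h => y.rep_nonzero (Subtype.ext h)),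
      by rw [Projectivization.submodule_mk]
         exact (Submodule.span_singleton_le_iff_mem _ _).2 y.rep.2⟩
  left_inv x := by
    obtain ⟨a, ha⟩ := Projectivization.exists_smul_eq_mk_rep K
      (⟨x.1.rep, x.2 (x.1.submodule_eq ▸ Submodule.mem_span_singleton_self _)⟩ : W)
      (fun h => x.1.rep_nonzero (congrArg Subtype.val h))
    apply Subtype.ext
    conv_rhs => rw [← x.1.mk_rep]
    exact (Projectivization.mk_eq_mk_iff K _ _ _ _).2 ⟨a, (congrArg Subtype.val ha).symm ▸ rfl⟩
  right_inv y := by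
    obtain ⟨a, ha⟩ := Projectivization.exists_smul_eq_mk_rep K (y.rep : V)
      (fun h => y.rep_nonzero (Subtype.ext h))
    conv_rhs => rw [← y.mk_rep]
    exact (Projectivization.mk_eq_mk_iff K _ _ _ _).2 ⟨a, Subtype.ext ha⟩
open Projectivization

/-- A linear equivalence induces an equivalence of projectivizations. -/
def projCongr {K V V₂ : Type*} [Field K] [AddCommGroup V] [Module K V]
    [AddCommGroup V₂] [Module K V₂] (e : V ≃ₗ[K] V₂) :
    Projectivization K V ≃ Projectivization K V₂ where
  toFun := Projectivization.lift
    (fun v => Projectivization.mk K (e v.1) (by simp [LinearEquiv.map_eq_zero_iff, v.2]))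
    (by rintro a b t h
        exact (Projectivization.mk_eq_mk_iff' K _ _ _ _).2 ⟨t, by rw [← map_smul, ← h]⟩)
  invFun := Projectivization.lift
    (fun v => Projectivization.mk K (e.symm v.1) (by simp [LinearEquiv.map_eq_zero_iff, v.2]))
    (by rintro a b t h
        exact (Projectivization.mk_eq_mk_iff' K _ _ _ _).2 ⟨t, by rw [← map_smul, ← h]⟩)
  left_inv x := by
    induction x using Projectivization.ind with
    | h v hv => exact (Projectivization.mk_eq_mk_iff' K _ _ _ _).2 ⟨1, by simp⟩
  right_inv x := by
    induction x using Projectivization.ind with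
    | h v hv => exact (Projectivization.mk_eq_mk_iff' K _ _ _ _).2 ⟨1, by simp⟩

/-- The projective line over `F` is `Option F`. -/
def p1EquivOption (F : Type*) [Field F] : Projectivization F (Fin 2 → F) ≃ Option F where
  toFun := Projectivization.lift
    (fun v => if h : v.1 1 = 0 then none else some (v.1 0 / v.1 1))
    (by rintro ⟨a, ha⟩ ⟨b, hb⟩ t h
        dsimp only at h ⊢
        have ht : t ≠ 0 := by rintro rfl; simp only [zero_smul] at h; exact ha h
        have h0 : a 0 = t * b 0 := congrFun h 0
        have h1 : a 1 = t * b 1 := congrFun h 1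
        by_cases hb1 : b 1 = 0
        · have : a 1 = 0 := by rw [h1, hb1, mul_zero]
          simp [this, hb1]
        · have ha1 : a 1 ≠ 0 := by rw [h1]; exact mul_ne_zero ht hb1
          rw [dif_neg ha1, dif_neg hb1, h0, h1, mul_div_mul_left _ _ ht])
  invFun o := o.elim
    (Projectivization.mk F ![1, 0] (fun h => one_ne_zero (congrFun h 0)))
    (fun a => Projectivization.mk F ![a, 1] (fun h => one_ne_zero (congrFun h 1)))
  left_inv x := by
    induction x using Projectivization.ind with
    | h v hv =>
      rw [Projectivization.lift_mk]
      by_cases h1 : v 1 = 0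
      · have h0 : v 0 ≠ 0 := by
          intro h0
          apply hv
          funext i
          fin_cases i <;> simp [h0, h1]
        rw [dif_pos h1]
        refine (Projectivization.mk_eq_mk_iff' F _ _ _ _).2 ⟨(v 0)⁻¹, ?_⟩
        funext i
        fin_cases i <;> simp [h1, inv_mul_cancel₀ h0]
      · rw [dif_neg h1]
        refine (Projectivization.mk_eq_mk_iff' F _ _ _ _).2 ⟨(v 1)⁻¹, ?_⟩
        funext i
        fin_cases i <;> simp [inv_mul_cancel₀ h1, div_eq_inv_mul]
  right_inv o := by
    cases o with
    | none => simp [Projectivization.lift_mk]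
    | some a => simp [Projectivization.lift_mk]


lemma card_pt_sub {F V : Type*} [Field F] [Fintype F] [AddCommGroup V] [Module F V]
    [FiniteDimensional F V] (W : Submodule F V) (hW : Module.finrank F W = 2) :
    Nat.card {x : Projectivization F V // x.submodule ≤ W} = Fintype.card F + 1 := by
  have e : {x : Projectivization F V // x.submodule ≤ W} ≃ Option F :=
    ((ptSubEquiv W).trans (projCongr
      ((Module.finBasisOfFinrankEq F W hW).equivFun))).trans (p1EquivOption F)
  rw [Nat.card_congr e, Nat.card_eq_fintype_card, Fintype.card_option]

/-- Double copies of a finset of line indices. -/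
def TT {m : ℕ} (S : Finset (Fin m)) : Finset (Fin m ⊕ Fin m) :=
  S.image Sum.inl ∪ S.image Sum.inr

lemma mem_TT {m : ℕ} {S : Finset (Fin m)} {t : Fin m ⊕ Fin m} :
    t ∈ TT S ↔ Sum.elim id id t ∈ S := by
  cases t <;> simp [TT]

lemma TT_card {m : ℕ} (S : Finset (Fin m)) : (TT S).card = 2 * S.card := by
  rw [TT, Finset.card_union_of_disjoint, Finset.card_image_of_injective _ Sum.inl_injective,
    Finset.card_image_of_injective _ Sum.inr_injective]
  · ring
  · rw [Finset.disjoint_left]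
    rintro a ha hb
    obtain ⟨x, -, rfl⟩ := Finset.mem_image.1 ha
    obtain ⟨y, -, h⟩ := Finset.mem_image.1 hb
    exact Sum.inl_ne_inr h.symm

lemma TT_union {m : ℕ} (S S' : Finset (Fin m)) : TT (S ∪ S') = TT S ∪ TT S' := by
  ext t; simp [mem_TT, Finset.mem_union]

lemma TT_disjoint {m : ℕ} {S S' : Finset (Fin m)} (h : Disjoint S S') :
    Disjoint (TT S) (TT S') := by
  rw [Finset.disjoint_left] at h ⊢
  intro t ht ht'
  exact h (mem_TT.1 ht) (mem_TT.1 ht')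

variable {F : Type} [Field F] {m k : ℕ}

/-- Span of the vectors indexed by a finset. -/
def SP (P Q : Fin m → (Fin k → F)) (T : Finset (Fin m ⊕ Fin m)) : Submodule F (Fin k → F) :=
  Submodule.span F ((T.image (Sum.elim P Q) : Finset (Fin k → F)) : Set (Fin k → F))

lemma mem_SP (P Q : Fin m → (Fin k → F)) {T : Finset (Fin m ⊕ Fin m)} {t : Fin m ⊕ Fin m}
    (ht : t ∈ T) : Sum.elim P Q t ∈ SP P Q T :=
  Submodule.subset_span (Finset.mem_coe.2 (Finset.mem_image_of_mem _ ht))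

lemma SP_union (P Q : Fin m → (Fin k → F)) (T T' : Finset (Fin m ⊕ Fin m)) :
    SP P Q (T ∪ T') = SP P Q T ⊔ SP P Q T' := by
  rw [SP, SP, SP, Finset.image_union, Finset.coe_union, Submodule.span_union]

lemma finrank_SP {P Q : Fin m → (Fin k → F)}
    (hgen : ∀ T : Finset (Fin m ⊕ Fin m), T.card ≤ k →
      LinearIndependent F (fun t : {x // x ∈ T} => Sum.elim P Q (t : Fin m ⊕ Fin m)))
    {T : Finset (Fin m ⊕ Fin m)} (hT : T.card ≤ k) :
    finrank F (SP P Q T) = T.card := by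
  have h := hgen T hT
  have himg : ((T.image (Sum.elim P Q) : Finset (Fin k → F)) : Set (Fin k → F))
      = Set.range (fun t : {x // x ∈ T} => Sum.elim P Q (t : Fin m ⊕ Fin m)) := by
    rw [Finset.coe_image]; exact Set.image_eq_range _ _
  rw [SP, himg, finrank_span_eq_card h, Fintype.card_coe]

lemma SP_top {P Q : Fin m → (Fin k → F)}
    (hgen : ∀ T : Finset (Fin m ⊕ Fin m), T.card ≤ k →
      LinearIndependent F (fun t : {x // x ∈ T} => Sum.elim P Q (t : Fin m ⊕ Fin m)))
    {T : Finset (Fin m ⊕ Fin m)} (hT : T.card = k) : SP P Q T = ⊤ :=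
  Submodule.eq_top_of_finrank_eq
    (by rw [finrank_SP hgen (le_of_eq hT), hT, Module.finrank_fin_fun])

lemma SP_inf_eq_bot {P Q : Fin m → (Fin k → F)}
    (hgen : ∀ T : Finset (Fin m ⊕ Fin m), T.card ≤ k →
      LinearIndependent F (fun t : {x // x ∈ T} => Sum.elim P Q (t : Fin m ⊕ Fin m)))
    {T T' : Finset (Fin m ⊕ Fin m)} (hd : Disjoint T T') (hc : T.card + T'.card ≤ k) :
    SP P Q T ⊓ SP P Q T' = ⊥ := by
  have h1 := Submodule.finrank_sup_add_finrank_inf_eq (SP P Q T) (SP P Q T')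
  rw [← SP_union, finrank_SP hgen (by rw [Finset.card_union_of_disjoint hd]; exact hc),
    Finset.card_union_of_disjoint hd, finrank_SP hgen (by omega), finrank_SP hgen (by omega)]
    at h1
  exact Submodule.finrank_eq_zero.mp (by omega)

lemma ker_zero {P Q : Fin m → (Fin k → F)}
    (hgen : ∀ T : Finset (Fin m ⊕ Fin m), T.card ≤ k →
      LinearIndependent F (fun t : {x // x ∈ T} => Sum.elim P Q (t : Fin m ⊕ Fin m)))
    (ρ : (Fin m ⊕ Fin m) → F) (hρ : ∑ t, ρ t • Sum.elim P Q t = 0)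
    {T : Finset (Fin m ⊕ Fin m)} (hT : T.card ≤ k) (hout : ∀ t ∉ T, ρ t = 0) : ρ = 0 := by
  have h := Fintype.linearIndependent_iff.mp (hgen T hT)
  have hsum : ∑ t : {x // x ∈ T}, ρ t • Sum.elim P Q (t : Fin m ⊕ Fin m) = 0 := by
    rw [Finset.sum_coe_sort T (fun t => ρ t • Sum.elim P Q t)]
    rw [← hρ]
    exact Finset.sum_subset (Finset.subset_univ T)
      (fun t _ ht => by rw [hout t ht, zero_smul])
  funext t
  by_cases ht : t ∈ T
  · exact h (fun t : {x // x ∈ T} => ρ t) hsum ⟨t, ht⟩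
  · exact hout t ht

variable {F : Type} [Field F]

/-- Projective points of `F^k`. -/
abbrev Pt (F : Type) [Field F] (k : ℕ) := Projectivization F (Fin k → F)

/-- for `k = 2m - 2` (`s = 2`) and the `m` generic lines `L i` spanned by
points `P i, Q i` of a rational normal curve (in linearly general position), for distinct
`i ≠ j` the span of the lines `L r` (`r ∉ {i,j}`) together with a point `x` of `L i` meets
`L j` in a one-dimensional subspace; this defines maps `f i j` between the projective
points of the lines (with `f i i = id`).  Then each line carries `q + 1` projective points,
the defining intersection is one-dimensional, `f j ℓ ∘ f i j = f i ℓ`, and each `f i j`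
is a bijection. -/
theorem statement3 [Fintype F] {m k : ℕ} (hm : 3 ≤ m) (hk : k + 2 = 2 * m) (hk4 : 4 ≤ k)
    (P Q : Fin m → (Fin k → F))
    (hgen : ∀ T : Finset (Fin m ⊕ Fin m), T.card ≤ k →
      LinearIndependent F (fun t : {x // x ∈ T} => Sum.elim P Q (t : Fin m ⊕ Fin m)))
    (L : Fin m → Submodule F (Fin k → F))
    (hL : ∀ i, L i = Submodule.span F {P i, Q i})
    (f : ∀ i j : Fin m,
      {x : Pt F k // x.submodule ≤ L i} → {y : Pt F k // y.submodule ≤ L j})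
    (hf : ∀ i j : Fin m, i ≠ j → ∀ x : {x : Pt F k // x.submodule ≤ L i},
      ((f i j x : Pt F k)).submodule ≤
        (⨆ r ∈ {r : Fin m | r ≠ i ∧ r ≠ j}, L r) ⊔ (x : Pt F k).submodule)
    (hfid : ∀ i (x : {x : Pt F k // x.submodule ≤ L i}), f i i x = x) :
    (∀ i, Nat.card {x : Pt F k // x.submodule ≤ L i} = Fintype.card F + 1) ∧
    (∀ i j : Fin m, i ≠ j → ∀ x : {x : Pt F k // x.submodule ≤ L i},
      Module.finrank F
        ↥(((⨆ r ∈ {r : Fin m | r ≠ i ∧ r ≠ j}, L r) ⊔ (x : Pt F k).submodule) ⊓ L j) = 1) ∧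
    (∀ i j ℓ : Fin m, ∀ x : {x : Pt F k // x.submodule ≤ L i},
      f j ℓ (f i j x) = f i ℓ x) ∧
    (∀ i j : Fin m, Function.Bijective (f i j)) := by
  classical
  -- the lines as spans
  have hLr : ∀ r, L r = SP P Q (TT {r}) := by
    intro r
    have hTTr : TT ({r} : Finset (Fin m)) = {Sum.inl r, Sum.inr r} := by
      ext t; cases t <;> simp [TT]
    rw [hL r, SP, hTTr, Finset.image_insert, Finset.image_singleton, Finset.coe_insert,
      Finset.coe_singleton]
    rfl
  have hfinL : ∀ r, Module.finrank F (L r) = 2 := by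
    intro r
    rw [hLr r, finrank_SP hgen (T := TT {r}) (by rw [TT_card, Finset.card_singleton]; omega), TT_card,
      Finset.card_singleton]
  -- the span of the remaining lines
  have hW : ∀ i j : Fin m, (⨆ r ∈ {r : Fin m | r ≠ i ∧ r ≠ j}, L r)
      = SP P Q (TT (Finset.univ.filter (fun r => r ≠ i ∧ r ≠ j))) := by
    intro i j
    apply le_antisymm
    · refine iSup₂_le fun r hr => ?_
      rw [hL r, Submodule.span_le]
      rintro x hx
      have hrT : ∀ t, Sum.elim id id t = r →
          t ∈ TT (Finset.univ.filter (fun r => r ≠ i ∧ r ≠ j)) := by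
        intro t ht
        rw [mem_TT, ht]
        exact Finset.mem_filter.2 ⟨Finset.mem_univ r, hr⟩
      simp only [Set.mem_insert_iff, Set.mem_singleton_iff] at hx
      rcases hx with rfl | rfl
      · exact mem_SP P Q (hrT (Sum.inl r) rfl)
      · exact mem_SP P Q (hrT (Sum.inr r) rfl)
    · rw [SP, Submodule.span_le]
      rintro x hx
      simp only [Finset.coe_image, Set.mem_image, Finset.mem_coe] at hx
      obtain ⟨t, ht, rfl⟩ := hx
      have ht' := mem_TT.1 ht
      cases t with
      | inl r =>
        have hr : r ≠ i ∧ r ≠ j := (Finset.mem_filter.1 ht').2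
        have hmem : Sum.elim P Q (Sum.inl r) ∈ L r := by
          rw [hL r]; exact Submodule.subset_span (Set.mem_insert _ _)
        exact le_iSup₂ (f := fun (r : Fin m) (_ : r ∈ {r : Fin m | r ≠ i ∧ r ≠ j}) => L r) r hr
          hmem
      | inr r =>
        have hr : r ≠ i ∧ r ≠ j := (Finset.mem_filter.1 ht').2
        have hmem : Sum.elim P Q (Sum.inr r) ∈ L r := by
          rw [hL r]; exact Submodule.subset_span (Set.mem_insert_of_mem _ rfl)
        exact le_iSup₂ (f := fun (r : Fin m) (_ : r ∈ {r : Fin m | r ≠ i ∧ r ≠ j}) => L r) r hr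
          hmem
  have hSij : ∀ i j : Fin m, i ≠ j →
      (Finset.univ.filter (fun r => r ≠ i ∧ r ≠ j)).card = m - 2 := by
    intro i j hij
    have h1 : (Finset.univ.filter (fun r => r ≠ i ∧ r ≠ j)) = Finset.univ \ {i, j} := by
      ext r
      simp [not_or]
    rw [h1, Finset.card_sdiff_of_subset (Finset.subset_univ _), Finset.card_pair hij, Finset.card_fin]
  -- PART 2
  have part2 : ∀ i j : Fin m, i ≠ j → ∀ x : {x : Pt F k // x.submodule ≤ L i},
      Module.finrank F
        ↥(((⨆ r ∈ {r : Fin m | r ≠ i ∧ r ≠ j}, L r) ⊔ (x : Pt F k).submodule) ⊓ L j) = 1 := by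
    intro i j hij x
    have hX1 : Module.finrank F ((x : Pt F k).submodule) = 1 :=
      Projectivization.finrank_submodule _
    rw [hW i j]
    set A := SP P Q (TT (Finset.univ.filter (fun r => r ≠ i ∧ r ≠ j))) with hA_def
    set X := (x : Pt F k).submodule with hX_def
    have hdisj : ∀ r : Fin m, r = i ∨ r = j →
        Disjoint (TT (Finset.univ.filter (fun r => r ≠ i ∧ r ≠ j))) (TT ({r} : Finset (Fin m))) := by
      intro r hr
      apply TT_disjoint
      rw [Finset.disjoint_left]
      intro a ha ha'
      have h1 := (Finset.mem_filter.1 ha).2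
      have h2 := Finset.mem_singleton.1 ha'
      rcases hr with rfl | rfl
      · exact h1.1 h2
      · exact h1.2 h2
    have hA : Module.finrank F A = k - 2 := by
      rw [hA_def, finrank_SP hgen (T := TT (Finset.univ.filter (fun r => r ≠ i ∧ r ≠ j))) (by rw [TT_card, hSij i j hij]; omega), TT_card, hSij i j hij]
      omega
    have hAL : A ⊓ L i = ⊥ := by
      rw [hA_def, hLr i]
      exact SP_inf_eq_bot hgen (hdisj i (Or.inl rfl))
        (by rw [TT_card, TT_card, hSij i j hij, Finset.card_singleton]; omega)
    have hAX : A ⊓ X = ⊥ := by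
      have h1 : A ⊓ X ≤ ⊥ := hAL ▸ inf_le_inf_left A x.2
      exact le_bot_iff.1 h1
    have hsupAX : Module.finrank F ↥(A ⊔ X) = k - 1 := by
      have h := Submodule.finrank_sup_add_finrank_inf_eq A X
      rw [hAX, finrank_bot, hA, hX1] at h
      omega
    have htop : (A ⊔ X) ⊔ L j = ⊤ := by
      rw [eq_top_iff]
      have h1 : A ⊔ L j = ⊤ := by
        rw [hA_def, hLr j, ← SP_union, ← TT_union]
        refine SP_top hgen ?_
        rw [TT_card, Finset.card_union_of_disjoint, hSij i j hij, Finset.card_singleton]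
        · omega
        · rw [Finset.disjoint_left]
          intro a ha ha'
          exact ((Finset.mem_filter.1 ha).2).2 (Finset.mem_singleton.1 ha')
      calc (⊤ : Submodule F (Fin k → F)) = A ⊔ L j := h1.symm
        _ ≤ (A ⊔ X) ⊔ L j := sup_le_sup_right le_sup_left _
    have h2 := Submodule.finrank_sup_add_finrank_inf_eq (A ⊔ X) (L j)
    rw [htop, finrank_top, Module.finrank_fin_fun, hsupAX, hfinL j] at h2
    omega
  -- PART 1
  have part1 : ∀ i, Nat.card {x : Pt F k // x.submodule ≤ L i} = Fintype.card F + 1 :=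
    fun i => card_pt_sub (L i) (hfinL i)
  -- the relation space
  set Φ : ((Fin m ⊕ Fin m) → F) →ₗ[F] (Fin k → F) :=
    Fintype.linearCombination F (Sum.elim P Q) with hΦ_def
  set R := LinearMap.ker Φ with hR_def
  have hranktop : LinearMap.range Φ = ⊤ := by
    rw [hΦ_def, Fintype.range_linearCombination]
    rw [eq_top_iff]
    have i0 : Fin m := ⟨0, by omega⟩
    have hcard : (TT (Finset.univ \ {i0})).card = k := by
      rw [TT_card, Finset.card_sdiff_of_subset (Finset.subset_univ _), Finset.card_singleton,
        Finset.card_fin]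
      omega
    calc (⊤ : Submodule F (Fin k → F)) = SP P Q (TT (Finset.univ \ {i0})) :=
          (SP_top hgen hcard).symm
      _ ≤ Submodule.span F (Set.range (Sum.elim P Q)) :=
          Submodule.span_mono (by rw [Finset.coe_image]; exact Set.image_subset_range _ _)
  have hRrank : Module.finrank F R = 2 := by
    have h := LinearMap.finrank_range_add_finrank_ker Φ
    have hd : Module.finrank F ((Fin m ⊕ Fin m) → F) = m + m := by
      rw [Module.finrank_pi, Fintype.card_sum, Fintype.card_fin]
    have hc : Module.finrank F ↥(LinearMap.range Φ) = k := by
      rw [hranktop, finrank_top, Module.finrank_fin_fun]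
    rw [hd, hc, ← hR_def] at h
    omega
  -- the evaluation maps
  have hgmem : ∀ (r : Fin m) (ρ : (Fin m ⊕ Fin m) → F),
      ρ (Sum.inl r) • P r + ρ (Sum.inr r) • Q r ∈ L r := by
    intro r ρ
    rw [hL r]
    exact Submodule.add_mem _
      (Submodule.smul_mem _ _ (Submodule.subset_span (Set.mem_insert _ _)))
      (Submodule.smul_mem _ _ (Submodule.subset_span (Set.mem_insert_of_mem _ rfl)))
  set g : ∀ r : Fin m, R →ₗ[F] ↥(L r) := fun r =>
    LinearMap.codRestrict (L r)
      (((LinearMap.proj (Sum.inl r)).smulRight (P r)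
        + (LinearMap.proj (Sum.inr r)).smulRight (Q r)).comp R.subtype)
      (fun ρ => hgmem r ρ.1) with hg_def
  have hg_apply : ∀ (r : Fin m) (ρ : R),
      ((g r ρ : Fin k → F)) = ρ.1 (Sum.inl r) • P r + ρ.1 (Sum.inr r) • Q r := fun _ _ => rfl
  -- injectivity of the evaluation maps
  have hker : ∀ r, Function.Injective (g r) := by
    intro r
    rw [← LinearMap.ker_eq_bot, LinearMap.ker_eq_bot']
    intro ρ hρ0
    have hρ0' : ρ.1 (Sum.inl r) • P r + ρ.1 (Sum.inr r) • Q r = 0 := by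
      rw [← hg_apply r ρ, hρ0]; rfl
    set σ : (Fin m ⊕ Fin m) → F :=
      fun t => if t = Sum.inl r ∨ t = Sum.inr r then ρ.1 t else 0 with hσ_def
    have hσsum : ∑ t, σ t • Sum.elim P Q t = 0 := by
      rw [← Finset.sum_subset (Finset.subset_univ ({Sum.inl r, Sum.inr r} : Finset (Fin m ⊕ Fin m)))
        (fun t _ ht => by
          simp only [Finset.mem_insert, Finset.mem_singleton] at ht
          simp only [hσ_def]
          rw [if_neg ht, zero_smul])]
      rw [Finset.sum_pair (by exact Sum.inl_ne_inr)]
      simp only [hσ_def]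
      simpa using hρ0'
    have hσ0 : σ = 0 := by
      refine ker_zero hgen σ hσsum (T := TT ({r} : Finset (Fin m)))
        (by rw [TT_card, Finset.card_singleton]; omega) ?_
      intro t ht
      simp only [hσ_def]
      refine if_neg ?_
      rintro (rfl | rfl) <;> exact ht (mem_TT.2 (by simp))
    have h1 : ρ.1 (Sum.inl r) = 0 := by
      have := congrFun hσ0 (Sum.inl r)
      simp only [hσ_def] at this
      simpa using this
    have h2 : ρ.1 (Sum.inr r) = 0 := by
      have := congrFun hσ0 (Sum.inr r)
      simp only [hσ_def] at this
      simpa using this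
    apply Subtype.ext
    have hρker : ∑ t, ρ.1 t • Sum.elim P Q t = 0 := by
      have h0 : Φ ρ.1 = 0 := LinearMap.mem_ker.mp ρ.2
      rwa [hΦ_def, Fintype.linearCombination_apply] at h0
    refine ker_zero hgen ρ.1 hρker (T := TT (Finset.univ \ {r}))
      (by rw [TT_card, Finset.card_sdiff_of_subset (Finset.subset_univ _), Finset.card_singleton,
        Finset.card_fin]; omega) ?_
    intro t ht
    rw [mem_TT] at ht
    cases t with
    | inl a =>
      have : a = r := by simpa using ht
      rw [this]; exact h1
    | inr a =>
      have : a = r := by simpa using ht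
      rw [this]; exact h2
  have hsurj : ∀ r, Function.Surjective (g r) := fun r =>
    (LinearMap.injective_iff_surjective_of_finrank_eq_finrank
      (by rw [hRrank, hfinL r])).mp (hker r)
  set e : ∀ r : Fin m, R ≃ₗ[F] ↥(L r) := fun r =>
    LinearEquiv.ofBijective (g r) ⟨hker r, hsurj r⟩ with he_def
  -- the characterization lemma
  have hchar : ∀ (i j : Fin m) (x' : {x : Pt F k // x.submodule ≤ L i}) (w : ↥(L i)),
      (x' : Pt F k).submodule = Submodule.span F {(w : Fin k → F)} →
      ((f i j x' : Pt F k)).submodule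
        = Submodule.span F {((e j ((e i).symm w) : Fin k → F))} := by
    intro i j x' w hw
    have hw0 : w ≠ 0 := by
      intro h
      have h1 := Projectivization.finrank_submodule (x' : Pt F k)
      rw [hw, h, Submodule.coe_zero, Submodule.span_zero_singleton] at h1
      rw [finrank_bot] at h1
      exact one_ne_zero h1.symm
    by_cases hij : i = j
    · subst hij
      rw [hfid i x', (e i).apply_symm_apply]
      exact hw
    · set ρ : R := (e i).symm w with hρ_def
      have heiρ : e i ρ = w := (e i).apply_symm_apply w
      have hρ0 : ρ ≠ 0 := fun h =>
        hw0 ((e i).symm.map_eq_zero_iff.mp (by rw [← hρ_def]; exact h))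
      set y : ↥(L j) := e j ρ with hy_def
      have hy0 : (y : Fin k → F) ≠ 0 := by
        intro h
        exact hρ0 ((e j).map_eq_zero_iff.mp (Subtype.ext h))
      have hgeq : ∀ r : Fin m, (e r) ρ = g r ρ := fun r => rfl
      have hrel : ∑ r : Fin m, ((g r ρ : Fin k → F)) = 0 := by
        have hρker : ∑ t, ρ.1 t • Sum.elim P Q t = 0 := by
          have h0 : Φ ρ.1 = 0 := LinearMap.mem_ker.mp ρ.2
          rwa [hΦ_def, Fintype.linearCombination_apply] at h0
        calc ∑ r : Fin m, ((g r ρ : Fin k → F))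
            = ∑ r : Fin m, (ρ.1 (Sum.inl r) • P r + ρ.1 (Sum.inr r) • Q r) := rfl
          _ = ∑ r : Fin m, ρ.1 (Sum.inl r) • P r + ∑ r : Fin m, ρ.1 (Sum.inr r) • Q r :=
              Finset.sum_add_distrib
          _ = ∑ t, ρ.1 t • Sum.elim P Q t :=
              (Fintype.sum_sum_type (f := fun t => ρ.1 t • Sum.elim P Q t)).symm
          _ = 0 := hρker
      have hpair : ∑ r ∈ ({i, j} : Finset (Fin m)), ((g r ρ : Fin k → F))
          = (w : Fin k → F) + (y : Fin k → F) := by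
        have h1 : ((g i ρ : Fin k → F)) = (w : Fin k → F) := by rw [← hgeq i, heiρ]
        rw [Finset.sum_pair hij, h1]
        rfl
      have hsplit : (w : Fin k → F) + (y : Fin k → F)
          + ∑ r ∈ Finset.univ \ ({i, j} : Finset (Fin m)), ((g r ρ : Fin k → F)) = 0 := by
        have h2 := Finset.sum_sdiff (f := fun r => ((g r ρ : Fin k → F)))
          (Finset.subset_univ ({i, j} : Finset (Fin m)))
        rw [hpair, hrel] at h2
        rw [← h2]
        abel
      have hymem : (y : Fin k → F) ∈
          (⨆ r ∈ {r : Fin m | r ≠ i ∧ r ≠ j}, L r) ⊔ (x' : Pt F k).submodule := by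
        have hsum_mem : ∑ r ∈ Finset.univ \ ({i, j} : Finset (Fin m)), ((g r ρ : Fin k → F))
            ∈ (⨆ r ∈ {r : Fin m | r ≠ i ∧ r ≠ j}, L r) := by
          refine Submodule.sum_mem _ fun r hr => ?_
          have hr' : r ≠ i ∧ r ≠ j := by
            simp only [Finset.mem_sdiff, Finset.mem_univ, true_and, Finset.mem_insert,
              Finset.mem_singleton, not_or] at hr
            exact hr
          have hmem : ((g r ρ : Fin k → F)) ∈ L r := (g r ρ).2
          exact le_iSup₂ (f := fun (r : Fin m) (_ : r ∈ {r : Fin m | r ≠ i ∧ r ≠ j}) => L r)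
            r hr' hmem
        have hw_mem : (w : Fin k → F) ∈ (x' : Pt F k).submodule := by
          rw [hw]
          exact Submodule.mem_span_singleton_self _
        have h4 : (y : Fin k → F) = -(w : Fin k → F)
            - ∑ r ∈ Finset.univ \ ({i, j} : Finset (Fin m)), ((g r ρ : Fin k → F)) := by
          linear_combination hsplit
        rw [h4]
        exact Submodule.sub_mem _ (Submodule.neg_mem _ (Submodule.mem_sup_right hw_mem))
          (Submodule.mem_sup_left hsum_mem)
      have hinter := part2 i j hij x'
      have hspan_y_le : Submodule.span F {(y : Fin k → F)} ≤
          ((⨆ r ∈ {r : Fin m | r ≠ i ∧ r ≠ j}, L r) ⊔ (x' : Pt F k).submodule) ⊓ L j :=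
        (Submodule.span_singleton_le_iff_mem _ _).2 (Submodule.mem_inf.2 ⟨hymem, y.2⟩)
      have h5 : Submodule.span F {(y : Fin k → F)}
          = ((⨆ r ∈ {r : Fin m | r ≠ i ∧ r ≠ j}, L r) ⊔ (x' : Pt F k).submodule) ⊓ L j :=
        Submodule.eq_of_le_of_finrank_eq hspan_y_le
          (by rw [finrank_span_singleton hy0, hinter])
      have hfle : ((f i j x' : Pt F k)).submodule ≤
          ((⨆ r ∈ {r : Fin m | r ≠ i ∧ r ≠ j}, L r) ⊔ (x' : Pt F k).submodule) ⊓ L j :=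
        le_inf (hf i j hij x') (f i j x').2
      have h6 : ((f i j x' : Pt F k)).submodule
          = ((⨆ r ∈ {r : Fin m | r ≠ i ∧ r ≠ j}, L r) ⊔ (x' : Pt F k).submodule) ⊓ L j :=
        Submodule.eq_of_le_of_finrank_eq hfle
          (by rw [Projectivization.finrank_submodule, hinter])
      rw [h6, ← h5, hy_def]
  -- PART 3
  have part3 : ∀ i j ℓ : Fin m, ∀ x : {x : Pt F k // x.submodule ≤ L i},
      f j ℓ (f i j x) = f i ℓ x := by
    intro i j ℓ x
    have hrep : (x : Pt F k).rep ∈ L i :=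
      x.2 ((x : Pt F k).submodule_eq ▸ Submodule.mem_span_singleton_self _)
    set w : ↥(L i) := ⟨(x : Pt F k).rep, hrep⟩ with hw_def
    have hxw : (x : Pt F k).submodule = Submodule.span F {(w : Fin k → F)} :=
      (x : Pt F k).submodule_eq
    have h1 := hchar i j x w hxw
    have h2 := hchar j ℓ (f i j x) (e j ((e i).symm w)) h1
    have h3 := hchar i ℓ x w hxw
    rw [(e j).symm_apply_apply] at h2
    exact Subtype.ext (Projectivization.submodule_injective (h2.trans h3.symm))
  -- PART 4
  have part4 : ∀ i j : Fin m, Function.Bijective (f i j) := by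
    intro i j
    exact Function.bijective_iff_has_inverse.2
      ⟨f j i, fun x => (part3 i j i x).trans (hfid i x),
        fun y => (part3 j i j y).trans (hfid j y)⟩
  exact ⟨part1, part2, part3, part4⟩
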